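/- arXiv:2504.19001 — 4 statements merged into one kernel-verified Lean document; each statement's English description precedes it below -/
import Mathlib

section
/- The maximum number of cells (connected components of the complement) in an arrangement of n hyperplanes in R^d, for n > d, is at most Σ_{i=0}^{d} C(n, i). -/
open Finset

/-- Key sign lemma: if a nontrivial linear relation `∑ c i • a i = 0` holds on `s` and every
sign pattern on `s` is realizable (with strict inequalities), then `∑ c i * w i < 0`. -/
lemma sign_aux {d n : ℕ} (a : Fin n → EuclideanSpace ℝ (Fin d)) (w : Fin n → ℝ)
    (s : Finset (Fin n)) (c : Fin n → ℝ)
    (hc0 : ∑ i ∈ s, c i • a i = 0)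
    (hex : ∃ i ∈ s, c i ≠ 0)
    (hshat : ∀ t ⊆ s, ∃ x : EuclideanSpace ℝ (Fin d),
      (∀ i, (inner ℝ (a i) x : ℝ) ≠ w i) ∧ ∀ i ∈ s, (w i < (inner ℝ (a i) x : ℝ) ↔ i ∈ t)) :
    ∑ i ∈ s, c i * w i < 0 := by
  classical
  obtain ⟨x, hx, hsign⟩ := hshat (s.filter fun i => 0 < c i) (filter_subset _ _)
  have hzero : ∑ i ∈ s, c i * (inner ℝ (a i) x : ℝ) = 0 := by
    have h1 : (inner ℝ (∑ i ∈ s, c i • a i) x : ℝ) = 0 := by rw [hc0, inner_zero_left]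
    rw [sum_inner] at h1
    simp only [real_inner_smul_left] at h1
    exact h1
  have key : ∀ i ∈ s, c i ≠ 0 → 0 < c i * ((inner ℝ (a i) x : ℝ) - w i) := by
    intro i hi hci
    rcases lt_trichotomy (c i) 0 with h | h | h
    · have hnot : ¬ (w i < (inner ℝ (a i) x : ℝ)) := by
        rw [hsign i hi, mem_filter]
        exact fun hh => absurd hh.2 (not_lt.2 h.le)
      have hlt : (inner ℝ (a i) x : ℝ) < w i := lt_of_le_of_ne (not_lt.1 hnot) (hx i)
      nlinarith
    · exact absurd h hci
    · have hgt : w i < (inner ℝ (a i) x : ℝ) := (hsign i hi).2 (mem_filter.2 ⟨hi, h⟩)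
      nlinarith
  have hpos : 0 < ∑ i ∈ s, c i * ((inner ℝ (a i) x : ℝ) - w i) := by
    refine Finset.sum_pos' (fun i hi => ?_) ?_
    · by_cases hci : c i = 0
      · simp [hci]
      · exact (key i hi hci).le
    · obtain ⟨i, hi, hci⟩ := hex
      exact ⟨i, hi, key i hi hci⟩
  have hsplit : ∑ i ∈ s, c i * ((inner ℝ (a i) x : ℝ) - w i)
      = ∑ i ∈ s, c i * (inner ℝ (a i) x : ℝ) - ∑ i ∈ s, c i * w i := by
    rw [← Finset.sum_sub_distrib]
    congr 1; ext i; ring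
  rw [hsplit, hzero] at hpos
  linarith

/-- An arrangement of `n > d` hyperplanes in `ℝ^d` has at most `∑_{i=0}^{d} C(n,i)` cells
(connected components of the complement of the union of the hyperplanes). -/
theorem stmt5 (d n : ℕ) (hdn : d < n) (a : Fin n → EuclideanSpace ℝ (Fin d))
    (ha : ∀ i, a i ≠ 0) (w : Fin n → ℝ) :
    Nat.card (ConnectedComponents
        { x : EuclideanSpace ℝ (Fin d) // ∀ i, (inner ℝ (a i) x : ℝ) ≠ w i })
      ≤ ∑ i ∈ Finset.range (d + 1), n.choose i := by
  classical
  set X := { x : EuclideanSpace ℝ (Fin d) // ∀ i, (inner ℝ (a i) x : ℝ) ≠ w i } with hX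
  -- sign vector of a point
  set σ : X → Finset (Fin n) := fun x => univ.filter (fun i => w i < (inner ℝ (a i) x.val : ℝ))
    with hσ
  -- the family of realized sign vectors
  set 𝒜 : Finset (Finset (Fin n)) := univ.filter (fun t => ∃ x : X, σ x = t) with h𝒜
  -- Step A: the number of connected components is at most the number of realized sign vectors
  have hlin : ∀ i : Fin n, IsLinearMap ℝ (fun z : EuclideanSpace ℝ (Fin d) =>
      (inner ℝ (a i) z : ℝ)) := fun i =>
    ⟨fun u v => inner_add_right _ _ _, fun r u => real_inner_smul_right _ _ _⟩
  have hsame : ∀ x y : X, σ x = σ y →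
      (x : ConnectedComponents X) = (y : ConnectedComponents X) := by
    intro x y hxy
    -- the convex open region with the sign pattern of x
    set R : Set (EuclideanSpace ℝ (Fin d)) :=
      ⋂ i, (if w i < (inner ℝ (a i) x.val : ℝ) then {z | w i < (inner ℝ (a i) z : ℝ)}
        else {z | (inner ℝ (a i) z : ℝ) < w i}) with hR
    have hconv : Convex ℝ R := by
      refine convex_iInter fun i => ?_
      split_ifs
      · exact convex_halfSpace_gt (hlin i) _
      · exact convex_halfSpace_lt (hlin i) _
    have hmem : ∀ z : X, σ z = σ x → z.val ∈ R := by
      intro z hz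
      refine Set.mem_iInter.2 fun i => ?_
      have hiff : (w i < (inner ℝ (a i) z.val : ℝ)) ↔ (w i < (inner ℝ (a i) x.val : ℝ)) := by
        constructor
        · intro h
          have : i ∈ σ z := mem_filter.2 ⟨mem_univ i, h⟩
          rw [hz] at this
          exact (mem_filter.1 this).2
        · intro h
          have : i ∈ σ x := mem_filter.2 ⟨mem_univ i, h⟩
          rw [← hz] at this
          exact (mem_filter.1 this).2
      split_ifs with h
      · exact hiff.2 h
      · exact lt_of_le_of_ne (not_lt.1 (fun hh => h (hiff.1 hh))) (z.prop i)
    have hsub : R ⊆ {z : EuclideanSpace ℝ (Fin d) | ∀ i, (inner ℝ (a i) z : ℝ) ≠ w i} := by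
      intro z hzR i
      have := Set.mem_iInter.1 hzR i
      split_ifs at this with h
      · exact (ne_of_lt (show w i < _ from this)).symm
      · exact ne_of_lt (show _ < w i from this)
    -- pull back to the subtype
    set A : Set X := Subtype.val ⁻¹' R with hA
    have himg : Subtype.val '' A = R := by
      rw [hA, Set.image_preimage_eq_inter_range, Subtype.range_val_subtype]
      exact Set.inter_eq_left.2 hsub
    have hpre : IsPreconnected A := by
      have := hconv.isPreconnected
      rw [← himg] at this
      exact Topology.IsInducing.subtypeVal.isPreconnected_image.1 this
    have hxA : x ∈ A := hmem x rfl
    have hyA : y ∈ A := hmem y hxy.symm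
    have : y ∈ connectedComponent x :=
      hpre.subset_connectedComponent hxA hyA
    exact (ConnectedComponents.coe_eq_coe'.2 this).symm
  -- representative of each component
  have hsurj : Function.Surjective ((↑) : X → ConnectedComponents X) :=
    ConnectedComponents.surjective_coe
  set rep : ConnectedComponents X → X := Function.surjInv hsurj with hrep
  have hrepeq : ∀ c, ((rep c : X) : ConnectedComponents X) = c :=
    fun c => Function.surjInv_eq hsurj c
  have hg : ∀ c : ConnectedComponents X, σ (rep c) ∈ 𝒜 := by
    intro c
    exact mem_filter.2 ⟨mem_univ _, ⟨rep c, rfl⟩⟩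
  set g : ConnectedComponents X → {t // t ∈ 𝒜} := fun c => ⟨σ (rep c), hg c⟩ with hgdef
  have ginj : Function.Injective g := by
    intro c₁ c₂ hcc
    have hσeq : σ (rep c₁) = σ (rep c₂) := congrArg Subtype.val hcc
    have := hsame (rep c₁) (rep c₂) hσeq
    rw [hrepeq, hrepeq] at this
    exact this
  have hcard : Nat.card (ConnectedComponents X) ≤ 𝒜.card := by
    have := Nat.card_le_card_of_injective g ginj
    rwa [Nat.card_eq_finsetCard] at this
  -- Step B: the VC dimension of the family is at most d
  have hvc : 𝒜.vcDim ≤ d := by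
    refine Finset.sup_le fun s hs => ?_
    rw [mem_shatterer] at hs
    by_contra hcd
    push_neg at hcd
    obtain ⟨s', hs'sub, hs'card⟩ := Finset.exists_subset_card_eq hcd
    have hshat' : 𝒜.Shatters s' := hs.mono_right hs'sub
    -- the vectors indexed by s' are linearly dependent
    have hnli : ¬ LinearIndependent ℝ (fun i : s' => a i) := by
      intro hli
      have h1 : Fintype.card s' ≤ Module.finrank ℝ (EuclideanSpace ℝ (Fin d)) :=
        hli.fintype_card_le_finrank
      rw [finrank_euclideanSpace_fin, Fintype.card_coe, hs'card] at h1
      omega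
    obtain ⟨cc, hcc0, i₀, hi₀⟩ := Fintype.not_linearIndependent_iff.1 hnli
    set c : Fin n → ℝ := fun i => if h : i ∈ s' then cc ⟨i, h⟩ else 0 with hc
    have hcsum : ∑ i ∈ s', c i • a i = 0 := by
      rw [← Finset.sum_coe_sort s' (fun i => c i • a i)]
      rw [← hcc0]
      refine Finset.sum_congr rfl fun i _ => ?_
      simp [hc, i.2]
    have hcex : ∃ i ∈ s', c i ≠ 0 := by
      refine ⟨i₀.val, i₀.2, ?_⟩
      simp only [hc, dif_pos i₀.2]
      simpa using hi₀
    have hrealize : ∀ t ⊆ s', ∃ x : EuclideanSpace ℝ (Fin d),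
        (∀ i, (inner ℝ (a i) x : ℝ) ≠ w i) ∧
        ∀ i ∈ s', (w i < (inner ℝ (a i) x : ℝ) ↔ i ∈ t) := by
      intro t ht
      obtain ⟨u, hu𝒜, hu⟩ := hshat' ht
      obtain ⟨x, hxu⟩ := (mem_filter.1 hu𝒜).2
      refine ⟨x.val, x.prop, fun i hi => ?_⟩
      constructor
      · intro h
        rw [← hu]
        refine mem_inter.2 ⟨hi, ?_⟩
        rw [← hxu]
        exact mem_filter.2 ⟨mem_univ _, h⟩
      · intro h
        rw [← hu] at h
        have : i ∈ u := (mem_inter.1 h).2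
        rw [← hxu] at this
        exact (mem_filter.1 this).2
    have h1 : ∑ i ∈ s', c i * w i < 0 := sign_aux a w s' c hcsum hcex hrealize
    have h2 : ∑ i ∈ s', (fun i => -(c i)) i * w i < 0 := by
      refine sign_aux a w s' _ ?_ ?_ hrealize
      · simp only [neg_smul]
        rw [Finset.sum_neg_distrib, hcsum, neg_zero]
      · obtain ⟨i, hi, hci⟩ := hcex
        exact ⟨i, hi, by simpa using hci⟩
    simp only [neg_mul, Finset.sum_neg_distrib] at h2
    linarith
  -- Step C: Sauer-Shelah
  have hss : 𝒜.card ≤ ∑ k ∈ Iic 𝒜.vcDim, (Fintype.card (Fin n)).choose k :=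
    (Finset.card_le_card_shatterer 𝒜).trans Finset.card_shatterer_le_sum_vcDim
  have hIic : (Iic 𝒜.vcDim : Finset ℕ) ⊆ Iic d := Iic_subset_Iic.2 hvc
  have hfinal : ∑ k ∈ Iic 𝒜.vcDim, (Fintype.card (Fin n)).choose k
      ≤ ∑ k ∈ Iic d, n.choose k := by
    simp only [Fintype.card_fin]
    exact Finset.sum_le_sum_of_subset hIic
  have hrange : (Iic d : Finset ℕ) = Finset.range (d + 1) := by
    ext k; simp [Nat.lt_succ_iff]
  calc Nat.card (ConnectedComponents X) ≤ 𝒜.card := hcard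
    _ ≤ ∑ k ∈ Iic 𝒜.vcDim, (Fintype.card (Fin n)).choose k := hss
    _ ≤ ∑ k ∈ Iic d, n.choose k := hfinal
    _ = ∑ i ∈ Finset.range (d + 1), n.choose i := by rw [hrange]
end

section
/- Suppose Q : X* × X̃ → R has the property that for every dataset S, a uniformly random m-element subset S' of S satisfies sup_x |Q(S,x) − Q(S',x)| ≤ α with probability at least 2/3. Then Q has sensitivity at most 2α on datasets of size at least 4m: for any two neighboring datasets S_1, S_2 (multisets of equal size n ≥ 4m differing in one element) and any x, |Q(S_1,x) − Q(S_2,x)| ≤ 2α. -/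
open scoped Classical

/-- If for every dataset a uniformly random `m`-element subset `α`-approximates `Q`
uniformly in `x` with probability at least `2/3` (i.e. at least a `2/3`-fraction of the
`m`-element index subsets are good), then `Q` has sensitivity at most `2α` on datasets
of size `n ≥ 4m`: neighboring datasets (differing in one entry) have `Q`-values within
`2α` of each other, for every `x`. -/
theorem stmt6 {X Y : Type*} (Q : Multiset X → Y → ℝ) (α : ℝ) (m : ℕ)
    (happ : ∀ (N : ℕ) (S : Fin N → X),
      (2 / 3 : ℝ) * (N.choose m : ℝ) ≤
        (((Finset.powersetCard m (Finset.univ : Finset (Fin N))).filter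
          (fun I : Finset (Fin N) =>
            ∀ y : Y, |Q (Multiset.map S Finset.univ.val) y - Q (Multiset.map S I.val) y| ≤ α)).card : ℝ))
    {n : ℕ} (hn : 4 * m ≤ n) (S₁ S₂ : Fin n → X) (j : Fin n)
    (hdiff : ∀ i, i ≠ j → S₁ i = S₂ i) (y : Y) :
    |Q (Multiset.map S₁ Finset.univ.val) y - Q (Multiset.map S₂ Finset.univ.val) y| ≤ 2 * α := by
  set P : Finset (Finset (Fin n)) := Finset.powersetCard m (Finset.univ : Finset (Fin n)) with hP
  set A₁ : Finset (Finset (Fin n)) := P.filter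
    (fun I => ∀ y : Y, |Q (Multiset.map S₁ Finset.univ.val) y - Q (Multiset.map S₁ I.val) y| ≤ α)
  set A₂ : Finset (Finset (Fin n)) := P.filter
    (fun I => ∀ y : Y, |Q (Multiset.map S₂ Finset.univ.val) y - Q (Multiset.map S₂ I.val) y| ≤ α)
  set B : Finset (Finset (Fin n)) := P.filter (fun I => j ∈ I) with hB
  have hPcard : P.card = n.choose m := by
    simp [hP, Finset.card_powersetCard]
  -- bound B.card ≤ choose (n-1) (m-1)
  have hBcard : B.card ≤ (n - 1).choose (m - 1) := by
    have : ∀ I ∈ B, I.erase j ∈ Finset.powersetCard (m - 1) ((Finset.univ : Finset (Fin n)).erase j) := by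
      intro I hI
      simp only [hB, Finset.mem_filter, hP, Finset.mem_powersetCard] at hI
      obtain ⟨⟨-, hIc⟩, hjI⟩ := hI
      simp [Finset.mem_powersetCard, Finset.erase_subset_erase _ (Finset.subset_univ I),
        Finset.card_erase_of_mem hjI, hIc]
    have hinj : ∀ I₁ ∈ B, ∀ I₂ ∈ B, I₁.erase j = I₂.erase j → I₁ = I₂ := by
      intro I₁ h₁ I₂ h₂ h
      simp only [hB, Finset.mem_filter] at h₁ h₂
      rw [← Finset.insert_erase h₁.2, h, Finset.insert_erase h₂.2]
    calc B.card ≤ (Finset.powersetCard (m - 1) ((Finset.univ : Finset (Fin n)).erase j)).card :=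
          Finset.card_le_card_of_injOn (fun I => I.erase j) this hinj
      _ = (n - 1).choose (m - 1) := by
          rw [Finset.card_powersetCard, Finset.card_erase_of_mem (Finset.mem_univ j),
            Finset.card_univ, Fintype.card_fin]
  -- 3 * B.card < choose n m
  have hchoosepos : 0 < n.choose m := Nat.choose_pos (le_trans (by omega) hn)
  have hkey : 3 * B.card < n.choose m := by
    rcases Nat.eq_zero_or_pos m with hm | hm
    · have : B = ∅ := by
        subst hm
        ext I
        simp only [hB, Finset.mem_filter, hP, Finset.mem_powersetCard, Finset.notMem_empty,
          iff_false, not_and]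
        rintro ⟨-, hc⟩
        rw [Finset.card_eq_zero] at hc
        subst hc; simp
      rw [this]; simpa using hchoosepos
    · have h1 : n * (n - 1).choose (m - 1) = n.choose m * m := by
        have := Nat.add_one_mul_choose_eq (n - 1) (m - 1)
        have hn1 : n - 1 + 1 = n := by omega
        have hm1 : m - 1 + 1 = m := by omega
        simpa only [Nat.succ_eq_add_one, hn1, hm1] using this
      have h4 : 4 * (n - 1).choose (m - 1) ≤ n.choose m := by
        have h2 : 4 * m * (n - 1).choose (m - 1) ≤ n * (n - 1).choose (m - 1) :=
          Nat.mul_le_mul_right _ hn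
        rw [h1] at h2
        exact Nat.le_of_mul_le_mul_right (by linarith [h2]) hm
      rcases Nat.eq_zero_or_pos ((n - 1).choose (m - 1)) with hc | hc
      · omega
      · omega
  -- good intersection avoiding j is nonempty
  have h1 := happ n S₁
  have h2 := happ n S₂
  have hsub : A₁ ∪ A₂ ⊆ P := Finset.union_subset (Finset.filter_subset _ _) (Finset.filter_subset _ _)
  have hcard1 : A₁.card + A₂.card = (A₁ ∪ A₂).card + (A₁ ∩ A₂).card :=
    (Finset.card_union_add_card_inter A₁ A₂).symm
  have hA1 : (2:ℝ) * (n.choose m : ℝ) ≤ 3 * A₁.card := by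
    have := h1; rw [div_mul_eq_mul_div, div_le_iff₀ (by norm_num)] at this
    linarith
  have hA2 : (2:ℝ) * (n.choose m : ℝ) ≤ 3 * A₂.card := by
    have := h2; rw [div_mul_eq_mul_div, div_le_iff₀ (by norm_num)] at this
    linarith
  have hA1' : 2 * n.choose m ≤ 3 * A₁.card := by exact_mod_cast hA1
  have hA2' : 2 * n.choose m ≤ 3 * A₂.card := by exact_mod_cast hA2
  have hunion : (A₁ ∪ A₂).card ≤ n.choose m := hPcard ▸ Finset.card_le_card hsub
  have hnonempty : ((A₁ ∩ A₂) \ B).Nonempty := by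
    rw [← Finset.card_pos]
    have hle : (A₁ ∩ A₂).card ≤ ((A₁ ∩ A₂) \ B).card + B.card :=
      Finset.card_le_card_sdiff_add_card
    omega
  obtain ⟨I, hI⟩ := hnonempty
  rw [Finset.mem_sdiff, Finset.mem_inter] at hI
  obtain ⟨⟨hI1, hI2⟩, hIB⟩ := hI
  have hjI : j ∉ I := by
    intro h
    exact hIB (Finset.mem_filter.2 ⟨(Finset.mem_filter.1 hI1).1, h⟩)
  have hmap : Multiset.map S₁ I.val = Multiset.map S₂ I.val := by
    apply Multiset.map_congr rfl
    intro i hi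
    exact hdiff i (fun h => hjI (h ▸ hi))
  have g1 := (Finset.mem_filter.1 hI1).2 y
  have g2 := (Finset.mem_filter.1 hI2).2 y
  rw [hmap] at g1
  calc |Q (Multiset.map S₁ Finset.univ.val) y - Q (Multiset.map S₂ Finset.univ.val) y|
      ≤ |Q (Multiset.map S₁ Finset.univ.val) y - Q (Multiset.map S₂ I.val) y| +
        |Q (Multiset.map S₂ I.val) y - Q (Multiset.map S₂ Finset.univ.val) y| := abs_sub_le _ _ _
    _ ≤ α + α := by rw [abs_sub_comm (Q (Multiset.map S₂ I.val) y)]; exact add_le_add g1 g2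
    _ = 2 * α := by ring
end

section
/- For any finite multiset S of linear constraints in R^d × R and any x ∈ R^d, depth_S(x) ≥ (d+1)·cdepth_S(x) − d·|S|. -/
set_option maxHeartbeats 1000000


open scoped Classical

noncomputable def depthLF {d : ℕ} (S : Multiset (EuclideanSpace ℝ (Fin d) × ℝ))
    (x : EuclideanSpace ℝ (Fin d)) : ℕ :=
  Multiset.card (S.filter (fun c => c.2 ≤ (inner ℝ c.1 x : ℝ)))

noncomputable def cdepthLF {d : ℕ} (S : Multiset (EuclideanSpace ℝ (Fin d) × ℝ))
    (x : EuclideanSpace ℝ (Fin d)) : ℕ :=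
  sSup { t : ℕ | x ∈ convexHull ℝ { z : EuclideanSpace ℝ (Fin d) | t ≤ depthLF S z } }

lemma depthLF_le_card {d : ℕ} (S : Multiset (EuclideanSpace ℝ (Fin d) × ℝ))
    (x : EuclideanSpace ℝ (Fin d)) : depthLF S x ≤ Multiset.card S :=
  Multiset.card_le_card (Multiset.filter_le _ _)

lemma countP_or_le {α : Type*} (s : Multiset α) (p q : α → Prop)
    [DecidablePred p] [DecidablePred q] :
    s.countP (fun a => p a ∨ q a) ≤ s.countP p + s.countP q := by
  induction s using Multiset.induction with
  | empty => simp
  | cons a s ih =>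
    by_cases hp : p a <;> by_cases hq : q a <;>
      simp [Multiset.countP_cons, hp, hq] <;> omega

lemma countP_exists_le {α β : Type*} (s : Multiset α) (T : Finset β) (p : β → α → Prop)
    [∀ b, DecidablePred (p b)] :
    s.countP (fun a => ∃ b ∈ T, p b a) ≤ ∑ b ∈ T, s.countP (p b) := by
  induction T using Finset.induction_on with
  | empty => simp
  | @insert b T hb ih =>
    rw [Finset.sum_insert hb]
    calc s.countP (fun a => ∃ c ∈ insert b T, p c a)
        = s.countP (fun a => p b a ∨ ∃ c ∈ T, p c a) := by
          apply Multiset.countP_congr rfl; intro a _; simp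
      _ ≤ s.countP (p b) + s.countP (fun a => ∃ c ∈ T, p c a) := countP_or_le _ _ _
      _ ≤ _ := by exact Nat.add_le_add_left ih _

/-- `depth_S(x) ≥ (d+1)·cdepth_S(x) − d·|S|`. -/
theorem stmt9 {d : ℕ} (S : Multiset (EuclideanSpace ℝ (Fin d) × ℝ))
    (x : EuclideanSpace ℝ (Fin d)) :
    ((d : ℝ) + 1) * (cdepthLF S x : ℝ) - (d : ℝ) * (Multiset.card S : ℝ)
      ≤ (depthLF S x : ℝ) := by
  set t := cdepthLF S x with ht
  set n := Multiset.card S with hn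
  -- the set defining the sSup
  set A : Set ℕ := { t : ℕ | x ∈ convexHull ℝ { z : EuclideanSpace ℝ (Fin d) | t ≤ depthLF S z } } with hA
  have hA0 : (0 : ℕ) ∈ A := by
    have : { z : EuclideanSpace ℝ (Fin d) | 0 ≤ depthLF S z } = Set.univ := by
      ext z; simp
    simp [hA, this]
  have hAbdd : BddAbove A := by
    refine ⟨n, fun m hm => ?_⟩
    by_contra hmn
    push_neg at hmn
    have : { z : EuclideanSpace ℝ (Fin d) | m ≤ depthLF S z } = ∅ := by
      ext z; simp only [Set.mem_setOf_eq, Set.mem_empty_iff_false, iff_false, not_le]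
      exact lt_of_le_of_lt (depthLF_le_card S z) hmn
    rw [hA] at hm
    simp [this] at hm
  have htA : t ∈ A := Nat.sSup_mem ⟨0, hA0⟩ hAbdd
  -- Caratheodory
  rw [hA, Set.mem_setOf_eq, convexHull_eq_union] at htA
  simp only [Set.mem_iUnion] at htA
  obtain ⟨T, hTsub, hTai, hxT⟩ := htA
  -- card of T ≤ d + 1
  have hTcard : T.card ≤ d + 1 := by
    have h1 := hTai.card_le_finrank_succ
    have h2 : Module.finrank ℝ (vectorSpan ℝ (Set.range ((↑) : T → EuclideanSpace ℝ (Fin d)))) ≤ d := by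
      refine le_trans (Submodule.finrank_le _) ?_
      simp [finrank_euclideanSpace_fin]
    simp only [Fintype.card_coe] at h1
    omega
  -- T nonempty
  have hTne : T.Nonempty := by
    rcases Finset.eq_empty_or_nonempty T with h | h
    · subst h; simp at hxT
    · exact h
  -- each constraint violated by x is violated by some z ∈ T
  have hkey : ∀ c : EuclideanSpace ℝ (Fin d) × ℝ, ¬ (c.2 ≤ (inner ℝ c.1 x : ℝ)) →
      ∃ z ∈ T, ¬ (c.2 ≤ (inner ℝ c.1 z : ℝ)) := by
    intro c hc
    by_contra hall
    push_neg at hall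
    apply hc
    have hconv : Convex ℝ { y : EuclideanSpace ℝ (Fin d) | c.2 ≤ (inner ℝ c.1 y : ℝ) } := by
      have hlin : IsLinearMap ℝ (fun y : EuclideanSpace ℝ (Fin d) => (inner ℝ c.1 y : ℝ)) :=
        ⟨fun a b => inner_add_right c.1 a b, fun r a => real_inner_smul_right c.1 a r⟩
      exact convex_halfSpace_ge hlin c.2
    have : convexHull ℝ (↑T : Set (EuclideanSpace ℝ (Fin d))) ⊆ { y : EuclideanSpace ℝ (Fin d) | c.2 ≤ (inner ℝ c.1 y : ℝ) } :=
      convexHull_min (fun z hz => hall z hz) hconv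
    exact this hxT
  -- counting
  set v := fun z : EuclideanSpace ℝ (Fin d) => S.countP (fun c => ¬ (c.2 ≤ (inner ℝ c.1 z : ℝ))) with hv
  have hsplit : ∀ z : EuclideanSpace ℝ (Fin d), depthLF S z + v z = n := by
    intro z
    rw [hv, depthLF, ← Multiset.countP_eq_card_filter, hn]
    exact (Multiset.card_eq_countP_add_countP _ S).symm
  have hvx : v x ≤ ∑ z ∈ T, v z := by
    calc v x ≤ S.countP (fun c => ∃ z ∈ T, ¬ (c.2 ≤ (inner ℝ c.1 z : ℝ))) := by
          simp only [hv, Multiset.countP_eq_card_filter]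
          exact Multiset.card_le_card (Multiset.monotone_filter_right S hkey)
      _ ≤ ∑ z ∈ T, v z := countP_exists_le S T _
  -- bounds
  have hnt : (t : ℝ) ≤ (n : ℝ) := by
    obtain ⟨z, hz⟩ := hTne
    have h1 : t ≤ depthLF S z := hTsub hz
    have h2 := depthLF_le_card S z
    exact_mod_cast le_trans h1 (hn ▸ h2)
  have hvz : ∀ z ∈ T, (v z : ℝ) ≤ (n : ℝ) - (t : ℝ) := by
    intro z hz
    have h1 : t ≤ depthLF S z := hTsub hz
    have h2 := hsplit z
    have : (depthLF S z : ℝ) + (v z : ℝ) = (n : ℝ) := by exact_mod_cast congrArg Nat.cast h2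
    have h3 : (t : ℝ) ≤ (depthLF S z : ℝ) := by exact_mod_cast h1
    linarith
  have hsum : ((∑ z ∈ T, v z : ℕ) : ℝ) ≤ ((d : ℝ) + 1) * ((n : ℝ) - (t : ℝ)) := by
    push_cast
    calc (∑ z ∈ T, (v z : ℝ)) ≤ ∑ z ∈ T, ((n : ℝ) - (t : ℝ)) := Finset.sum_le_sum hvz
      _ = (T.card : ℝ) * ((n : ℝ) - (t : ℝ)) := by
          rw [Finset.sum_const, nsmul_eq_mul]
      _ ≤ ((d : ℝ) + 1) * ((n : ℝ) - (t : ℝ)) := by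
          apply mul_le_mul_of_nonneg_right _ (by linarith)
          exact_mod_cast hTcard
  have hvxr : ((v x : ℕ) : ℝ) ≤ ((d : ℝ) + 1) * ((n : ℝ) - (t : ℝ)) :=
    le_trans (by exact_mod_cast hvx) hsum
  have hx0 : (depthLF S x : ℝ) + (v x : ℝ) = (n : ℝ) := by
    exact_mod_cast congrArg Nat.cast (hsplit x)
  linarith [hvxr, hx0]
end

section
/- Let S be a multiset of n constraints in R^d × R and S' ⊆ S a subset of size m such that for every point p ∈ R^d, |depth_S(p)/n − depth_{S'}(p)/m| ≤ α. Then for every point p ∈ R^d, |cdepth_S(p)/n − cdepth_{S'}(p)/m| ≤ α. -/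
open scoped Classical

lemma cdepth_bdd {d : ℕ} (S : Multiset (EuclideanSpace ℝ (Fin d) × ℝ))
    (p : EuclideanSpace ℝ (Fin d)) :
    BddAbove { t : ℕ | p ∈ convexHull ℝ { z : EuclideanSpace ℝ (Fin d) | t ≤ depthLF S z } } := by
  refine ⟨Multiset.card S, fun t ht => ?_⟩
  by_contra hlt
  push_neg at hlt
  have hempty : { z : EuclideanSpace ℝ (Fin d) | t ≤ depthLF S z } = ∅ := by
    ext z
    simp only [Set.mem_setOf_eq, Set.mem_empty_iff_false, iff_false, not_le]
    exact lt_of_le_of_lt (depthLF_le_card S z) hlt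
  simp only [Set.mem_setOf_eq, hempty] at ht
  simpa using ht

lemma cdepth_zero_mem {d : ℕ} (S : Multiset (EuclideanSpace ℝ (Fin d) × ℝ))
    (p : EuclideanSpace ℝ (Fin d)) :
    0 ∈ { t : ℕ | p ∈ convexHull ℝ { z : EuclideanSpace ℝ (Fin d) | t ≤ depthLF S z } } := by
  have : p ∈ { z : EuclideanSpace ℝ (Fin d) | 0 ≤ depthLF S z } := Nat.zero_le _
  exact subset_convexHull ℝ _ this

lemma cdepth_aux {d : ℕ} (T U : Multiset (EuclideanSpace ℝ (Fin d) × ℝ))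
    (n m : ℕ) (hn0 : 0 < n) (hm0 : 0 < m) (α : ℝ)
    (h : ∀ z, (depthLF T z : ℝ) / n - α ≤ (depthLF U z : ℝ) / m)
    (p : EuclideanSpace ℝ (Fin d)) :
    (cdepthLF T p : ℝ) / n - α ≤ (cdepthLF U p : ℝ) / m := by
  set a := cdepthLF T p with ha
  have hamem : a ∈ { t : ℕ | p ∈ convexHull ℝ { z : EuclideanSpace ℝ (Fin d) | t ≤ depthLF T z } } :=
    Nat.sSup_mem ⟨0, cdepth_zero_mem T p⟩ (cdepth_bdd T p)
  set k : ℕ := ⌈(m : ℝ) * ((a : ℝ) / n - α)⌉₊ with hk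
  have hsubset : { z : EuclideanSpace ℝ (Fin d) | a ≤ depthLF T z } ⊆
      { z : EuclideanSpace ℝ (Fin d) | k ≤ depthLF U z } := by
    intro z hz
    simp only [Set.mem_setOf_eq] at hz ⊢
    rw [hk, Nat.ceil_le]
    have h1 : (a : ℝ) / n - α ≤ (depthLF U z : ℝ) / m := by
      refine le_trans ?_ (h z)
      have : (a : ℝ) ≤ (depthLF T z : ℝ) := by exact_mod_cast hz
      have h2 : (a : ℝ) / n ≤ (depthLF T z : ℝ) / n := by gcongr
      linarith
    calc (m : ℝ) * ((a : ℝ) / n - α) ≤ (m : ℝ) * ((depthLF U z : ℝ) / m) := by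
          apply mul_le_mul_of_nonneg_left h1 (by positivity)
      _ = (depthLF U z : ℝ) := by field_simp
  have hkmem : k ∈ { t : ℕ | p ∈ convexHull ℝ { z : EuclideanSpace ℝ (Fin d) | t ≤ depthLF U z } } :=
    convexHull_mono hsubset hamem
  have hkb : k ≤ cdepthLF U p := le_csSup (cdepth_bdd U p) hkmem
  have : (m : ℝ) * ((a : ℝ) / n - α) ≤ (cdepthLF U p : ℝ) := by
    calc (m : ℝ) * ((a : ℝ) / n - α) ≤ (k : ℝ) := Nat.le_ceil _
      _ ≤ (cdepthLF U p : ℝ) := by exact_mod_cast hkb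
  have hm' : (0:ℝ) < m := by positivity
  rw [le_div_iff₀ hm']
  linarith [mul_comm (m : ℝ) ((a : ℝ) / n - α)]

/-- If the relative depth function of `S` is uniformly `α`-approximated by the subset
`S'`, then so is its convexification `cdepth`. -/
theorem stmt12 {d : ℕ} (S S' : Multiset (EuclideanSpace ℝ (Fin d) × ℝ)) (hsub : S' ≤ S)
    (α : ℝ) (n m : ℕ) (hn : Multiset.card S = n) (hm : Multiset.card S' = m)
    (hn0 : 0 < n) (hm0 : 0 < m)
    (happ : ∀ p : EuclideanSpace ℝ (Fin d),
      |(depthLF S p : ℝ) / (n : ℝ) - (depthLF S' p : ℝ) / (m : ℝ)| ≤ α) :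
    ∀ p : EuclideanSpace ℝ (Fin d),
      |(cdepthLF S p : ℝ) / (n : ℝ) - (cdepthLF S' p : ℝ) / (m : ℝ)| ≤ α := by
  intro p
  rw [abs_sub_le_iff]
  constructor
  · have := cdepth_aux S S' n m hn0 hm0 α (fun z => by
      have := happ z; rw [abs_sub_le_iff] at this; linarith [this.1]) p
    linarith
  · have := cdepth_aux S' S m n hm0 hn0 α (fun z => by
      have := happ z; rw [abs_sub_le_iff] at this; linarith [this.2]) p
    linarith
end
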